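/- Consider the edge-flip representation of the constrained tree Ising model on a rooted tree of uniform degree $d \geq 2$ and depth $L = \log_d p$: the root has value $0$; flip probabilities are $q_\ell = 0$ for $\ell < \ell_0$ and $q_\ell = \frac{1}{1+d^{\beta\ell}}$ for $\ell \geq \ell_0$, where $\ell_0 = \frac{\alpha}{\beta}L$ is an integer and $0 < \alpha < \beta \leq 1$. Let $\|\mathbf x\|_0 = A_L$ be the number of active leaves. Then $\mathbb E[\|\mathbf x\|_0] \leq (L+1)\, p^{1-\alpha}$, i.e., $\mathbb E[\|\mathbf x\|_0] \leq (\log_d p + 1)\, p^{1-\alpha}$. -/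

import Mathlib

open MeasureTheory ProbabilityTheory Finset

/-- Vertices at level `ℓ` of the complete `d`-ary tree are indexed by strings
`s : Fin ℓ → Fin d`; `F ℓ s ω = true` means vertex `s` disagrees with its parent.
`pathFlipCount` counts the disagreeing edges on the path from the root to `s`. -/
def pathFlipCount (d : ℕ) {Ω : Type*} (F : (ℓ : ℕ) → (Fin ℓ → Fin d) → Ω → Bool)
    (ℓ : ℕ) (s : Fin ℓ → Fin d) (ω : Ω) : ℕ :=
  ((Finset.Icc 1 ℓ).filter fun k =>
    (if h : k ≤ ℓ then F k (fun i => s (Fin.castLE h i)) ω else false) = true).card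

/-- `A_ℓ`: the number of value-`1` vertices at level `ℓ` (the root has value `0`, and an
edge flips the value exactly when it disagrees). -/
def activeCount (d : ℕ) {Ω : Type*} (F : (ℓ : ℕ) → (Fin ℓ → Fin d) → Ω → Bool)
    (ℓ : ℕ) (ω : Ω) : ℕ :=
  (Finset.univ.filter fun s : Fin ℓ → Fin d => pathFlipCount d F ℓ s ω % 2 = 1).card

/-- The edge-flip representation of the constrained tree Ising model of Theorem 2:
the edge disagreement indicators are independent, and a level-`ℓ` vertex disagrees with
its parent with probability `q_ℓ = 0` for `ℓ < ℓ₀` and `q_ℓ = 1/(1+d^{βℓ})` for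
`ℓ ≥ ℓ₀`. -/
def IsConstrainedFlipModel (d L ℓ₀ : ℕ) (β : ℝ) {Ω : Type}
    [MeasurableSpace Ω] (μ : Measure Ω)
    (F : (ℓ : ℕ) → (Fin ℓ → Fin d) → Ω → Bool) : Prop :=
  (∀ ℓ s, Measurable fun ω => F ℓ s ω) ∧
  iIndepFun
    (fun v : Σ ℓ : ℕ, Fin ℓ → Fin d => fun ω => F v.1 v.2 ω) μ ∧
  (∀ ℓ, 1 ≤ ℓ → ℓ ≤ L → ∀ s : Fin ℓ → Fin d,
    μ {ω | F ℓ s ω = true} =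
      ENNReal.ofReal (if ℓ < ℓ₀ then 0 else 1 / (1 + (d : ℝ) ^ (β * ℓ))))

/-- In the constrained tree Ising model with `ℓ₀ = (α/β)L`,
`0 < α < β ≤ 1`, the expected number of active leaves satisfies
`E‖x‖₀ ≤ (L+1) p^{1-α} = (log_d p + 1) p^{1-α}`, where `p = d^L`. -/
theorem constrained_ising_expected_sparsity_upper (d : ℕ) (hd : 2 ≤ d) (α β : ℝ)
    (hα : 0 < α) (hαβ : α < β) (hβ : β ≤ 1) :
    ∀ L ℓ₀ : ℕ, (ℓ₀ : ℝ) * β = α * L →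
      ∀ (Ω : Type) (mΩ : MeasurableSpace Ω) (μ : Measure Ω), IsProbabilityMeasure μ →
      ∀ F : (ℓ : ℕ) → (Fin ℓ → Fin d) → Ω → Bool, IsConstrainedFlipModel d L ℓ₀ β μ F →
        ∫ ω, (activeCount d F L ω : ℝ) ∂μ ≤ ((L : ℝ) + 1) * ((d : ℝ) ^ L) ^ (1 - α) := by
  intro L ℓ₀ hℓ₀ Ω mΩ μ hμ F hF
  obtain ⟨hmeas, hindep, hprob⟩ := hF
  have hd0 : (0:ℝ) < d := by positivity
  have hd1 : (1:ℝ) < d := by exact_mod_cast hd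
  have hβ0 : (0:ℝ) < β := hα.trans hαβ
  set c : ℝ := (d:ℝ) ^ (-(α * L)) with hc
  have hc0 : 0 < c := Real.rpow_pos_of_pos hd0 _
  set S : (Fin L → Fin d) → Set Ω := fun s => {ω | pathFlipCount d F L s ω % 2 = 1} with hS
  have hSmeas : ∀ s, MeasurableSet (S s) := by
    intro s
    have hm : Measurable fun ω => pathFlipCount d F L s ω := by
      unfold pathFlipCount
      simp only [Finset.card_filter]
      apply Finset.measurable_sum
      intro k hk
      have hkL : k ≤ L := (Finset.mem_Icc.mp hk).2
      simp only [dif_pos hkL]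
      exact (measurable_from_top (f := fun b : Bool => if b = true then (1:ℕ) else 0)).comp
        (hmeas k _)
    have hrw : S s = (fun ω => pathFlipCount d F L s ω) ⁻¹' {n : ℕ | n % 2 = 1} := rfl
    rw [hrw]
    exact hm (show MeasurableSet {n : ℕ | n % 2 = 1} from trivial)
  have key : ∀ s : Fin L → Fin d, μ (S s) ≤ ENNReal.ofReal ((L:ℝ) * c) := by
    intro s
    set A : ℕ → Set Ω := fun k =>
      {ω | (if h : k ≤ L then F k (fun i => s (Fin.castLE h i)) ω else false) = true} with hA
    have hsub : S s ⊆ ⋃ k ∈ Finset.Icc 1 L, A k := by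
      intro ω hω
      simp only [hS, Set.mem_setOf_eq] at hω
      by_contra hcon
      simp only [Set.mem_iUnion, not_exists] at hcon
      have hempty : ((Finset.Icc 1 L).filter fun k =>
          (if h : k ≤ L then F k (fun i => s (Fin.castLE h i)) ω else false) = true) = ∅ := by
        apply Finset.filter_eq_empty_iff.mpr
        intro k hk hk'
        exact hcon k hk hk'
      unfold pathFlipCount at hω
      rw [hempty] at hω
      simp at hω
    have hq : ∀ k ∈ Finset.Icc 1 L, μ (A k) ≤ ENNReal.ofReal c := by
      intro k hk
      obtain ⟨hk1, hkL⟩ := Finset.mem_Icc.mp hk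
      have hAk : A k = {ω | F k (fun i => s (Fin.castLE hkL i)) ω = true} := by
        simp only [hA, dif_pos hkL]
      rw [hAk, hprob k hk1 hkL]
      apply ENNReal.ofReal_le_ofReal
      by_cases hkℓ : k < ℓ₀
      · simp [hkℓ, hc0.le]
      · push_neg at hkℓ
        simp only [if_neg (not_lt.mpr hkℓ)]
        have h1 : (1:ℝ) / (1 + (d:ℝ) ^ (β * k)) ≤ (d:ℝ) ^ (-(β * k)) := by
          rw [Real.rpow_neg hd0.le, ← one_div]
          apply div_le_div_of_nonneg_left one_pos.le (Real.rpow_pos_of_pos hd0 _)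
          linarith [Real.rpow_pos_of_pos hd0 (β * k)]
        have h2 : (d:ℝ) ^ (-(β * k)) ≤ c := by
          rw [hc]
          apply Real.rpow_le_rpow_left_iff hd1 |>.mpr
          have : α * L = β * ℓ₀ := by rw [← hℓ₀]; ring
          rw [this]
          have : (ℓ₀:ℝ) ≤ k := by exact_mod_cast hkℓ
          nlinarith
        linarith
    calc μ (S s) ≤ μ (⋃ k ∈ Finset.Icc 1 L, A k) := measure_mono hsub
      _ ≤ ∑ k ∈ Finset.Icc 1 L, μ (A k) := measure_biUnion_finset_le _ _
      _ ≤ ∑ k ∈ Finset.Icc 1 L, ENNReal.ofReal c := Finset.sum_le_sum hq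
      _ = (L : ENNReal) * ENNReal.ofReal c := by
          rw [Finset.sum_const, Nat.card_Icc]; simp [nsmul_eq_mul]
      _ = ENNReal.ofReal ((L:ℝ) * c) := by
          rw [ENNReal.ofReal_mul (by positivity)]
          simp
  have hcount : ∀ ω, (activeCount d F L ω : ℝ) =
      ∑ s : Fin L → Fin d, (S s).indicator (fun _ => (1:ℝ)) ω := by
    intro ω
    unfold activeCount
    rw [Finset.card_filter]
    push_cast
    apply Finset.sum_congr rfl
    intro s _
    simp [Set.indicator_apply, hS, Set.mem_setOf_eq]
  have hP : (0:ℝ) < (d:ℝ)^L := by positivity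
  have hPc : (d:ℝ)^L * c = ((d:ℝ)^L)^(1-α) := by
    rw [hc, ← Real.rpow_natCast (d:ℝ) L, ← Real.rpow_add hd0, ← Real.rpow_mul hd0.le]
    ring_nf
  calc ∫ ω, (activeCount d F L ω : ℝ) ∂μ
      = ∑ s : Fin L → Fin d, ∫ ω, (S s).indicator (fun _ => (1:ℝ)) ω ∂μ := by
        rw [← integral_finset_sum]
        · exact integral_congr_ae (Filter.Eventually.of_forall hcount)
        · exact fun s _ => (integrable_const (1:ℝ)).indicator (hSmeas s)
    _ = ∑ s : Fin L → Fin d, (μ (S s)).toReal := by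
        refine Finset.sum_congr rfl fun s _ => ?_
        exact integral_indicator_one (hSmeas s)
    _ ≤ ∑ s : Fin L → Fin d, (L:ℝ) * c := by
        refine Finset.sum_le_sum fun s _ => ?_
        exact ENNReal.toReal_le_of_le_ofReal (by positivity) (key s)
    _ = (d:ℝ)^L * ((L:ℝ) * c) := by
        rw [Finset.sum_const, nsmul_eq_mul]
        congr 1
        simp [Fintype.card_fun]
    _ = (L:ℝ) * ((d:ℝ)^L * c) := by ring
    _ ≤ ((L:ℝ) + 1) * ((d:ℝ)^L)^(1-α) := by
        rw [hPc]
        have hnn : (0:ℝ) ≤ ((d:ℝ)^L)^(1-α) := Real.rpow_nonneg hP.le _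
        nlinarith
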